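/- Let E be an A-module and (a₁, …, aₙ) an E-regular sequence in a commutative ring A. Then each aᵢ is E-regular modulo the submodule generated by the aⱼE with j ≠ i; that is, if Σⱼ aⱼxⱼ = 0 with xⱼ ∈ E, then xᵢ ∈ Σ_{j≠i} aⱼE. -/

import Mathlib

section Aux

variable {A : Type*} [CommRing A] {E : Type*} [AddCommGroup E] [Module A E]

private lemma key_stmt5 {ι : Type*} [DecidableEq ι] (a : ι → A) (t : Finset ι) (x : E) :
    x ∈ Ideal.span (a '' ↑t) • (⊤ : Submodule A E) ↔
      ∃ y : ι → E, ∑ j ∈ t, a j • y j = x := by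
  constructor
  · intro hx
    let F : (ι → E) →ₗ[A] E :=
      { toFun := fun y => ∑ j ∈ t, a j • y j
        map_add' := by intro y z; simp [Finset.sum_add_distrib, smul_add]
        map_smul' := by intro c y; simp [Finset.smul_sum, smul_comm c] }
    have hle : Ideal.span (a '' ↑t) • (⊤ : Submodule A E) ≤ LinearMap.range F := by
      rw [Submodule.smul_le]
      intro r hr m _
      induction hr using Submodule.span_induction with
      | mem r hrs =>
        obtain ⟨j, hj, rfl⟩ := hrs
        refine ⟨Pi.single j m, ?_⟩
        show ∑ j' ∈ t, a j' • Pi.single j m j' = a j • m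
        rw [Finset.sum_eq_single j]
        · simp
        · intro b _ hb; simp [Pi.single_eq_of_ne hb]
        · intro h; exact absurd (Finset.mem_coe.mp hj) h
      | zero => simp
      | add r s _ _ hr hs => rw [add_smul]; exact (LinearMap.range F).add_mem hr hs
      | smul c r _ hr => rw [smul_eq_mul, mul_smul]; exact (LinearMap.range F).smul_mem c hr
    exact hle hx
  · rintro ⟨y, rfl⟩
    exact Submodule.sum_mem _ fun j hj =>
      Submodule.smul_mem_smul (Ideal.subset_span ⟨j, hj, rfl⟩) Submodule.mem_top

private lemma main_stmt5 (n : ℕ) : ∀ (a : Fin n → A)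
    (_ : ∀ i : Fin n, ∀ x : E,
      a i • x ∈ Ideal.span (a '' {j | j < i}) • (⊤ : Submodule A E) →
      x ∈ Ideal.span (a '' {j | j < i}) • (⊤ : Submodule A E))
    (i : Fin n) (x : Fin n → E), ∑ j, a j • x j = 0 →
    x i ∈ Ideal.span (a '' {j | j ≠ i}) • (⊤ : Submodule A E) := by
  induction n with
  | zero => exact fun _ _ i => i.elim0
  | succ n ih =>
    intro a hreg i x hx
    have hsum : ∑ j : Fin n, a j.castSucc • x j.castSucc
        + a (Fin.last n) • x (Fin.last n) = 0 := by
      rw [← Fin.sum_univ_castSucc (f := fun j => a j • x j)]; exact hx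
    have hlast_mem : a (Fin.last n) • x (Fin.last n) ∈
        Ideal.span (a '' {j | j < Fin.last n}) • (⊤ : Submodule A E) := by
      have heq : a (Fin.last n) • x (Fin.last n)
          = -∑ j : Fin n, a j.castSucc • x j.castSucc := by
        rw [eq_neg_iff_add_eq_zero, add_comm]; exact hsum
      rw [heq]
      exact Submodule.neg_mem _ (Submodule.sum_mem _ fun j _ =>
        Submodule.smul_mem_smul
          (Ideal.subset_span ⟨j.castSucc, Fin.castSucc_lt_last j, rfl⟩) Submodule.mem_top)
    have hxlast := hreg (Fin.last n) _ hlast_mem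
    -- get an explicit representation of x (last)
    have hsetlast : a '' (↑(Finset.univ.filter (fun j : Fin (n+1) => j < Fin.last n))
        : Set (Fin (n+1))) = a '' {j | j < Fin.last n} := by
      congr 1; ext j; simp
    obtain ⟨y, hy⟩ := (key_stmt5 a (Finset.univ.filter (fun j : Fin (n+1) => j < Fin.last n))
      (x (Fin.last n))).mp (by rwa [hsetlast])
    have hfilt : Finset.univ.filter (fun j : Fin (n+1) => j < Fin.last n)
        = Finset.univ.map Fin.castSuccEmb := by
      ext j
      simp only [Finset.mem_filter, Finset.mem_univ, true_and, Finset.mem_map]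
      constructor
      · intro hj
        have h' : (j : ℕ) < n := by simpa [Fin.lt_def] using hj
        exact ⟨j.castLT h', by ext; simp [Fin.castSuccEmb]⟩
      · rintro ⟨k, rfl⟩
        exact Fin.castSucc_lt_last k
    have hy' : ∑ j : Fin n, a j.castSucc • y j.castSucc = x (Fin.last n) := by
      rw [← hy, hfilt, Finset.sum_map]
      rfl
    rcases Fin.eq_castSucc_or_eq_last i with ⟨i', rfl⟩ | rfl
    · -- i = castSucc i'
      set a' : Fin n → A := fun j => a j.castSucc with ha'
      set x' : Fin n → E := fun j => x j.castSucc + a (Fin.last n) • y j.castSucc with hx'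
      have himg : ∀ i' : Fin n, a' '' {j : Fin n | j < i'}
          = a '' {j : Fin (n+1) | j < i'.castSucc} := by
        intro i'
        ext b
        constructor
        · rintro ⟨j, hj, rfl⟩
          exact ⟨j.castSucc, Fin.castSucc_lt_castSucc_iff.mpr hj, rfl⟩
        · rintro ⟨j, hj, rfl⟩
          rw [Set.mem_setOf_eq, Fin.lt_def, Fin.coe_castSucc] at hj
          have hjn : (j : ℕ) < n := lt_of_lt_of_le hj (le_of_lt i'.isLt)
          refine ⟨j.castLT hjn, ?_, ?_⟩
          · rw [Set.mem_setOf_eq, Fin.lt_def]; simpa using hj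
          · exact congrArg a (by ext; simp)
      have hreg' : ∀ i : Fin n, ∀ z : E,
          a' i • z ∈ Ideal.span (a' '' {j | j < i}) • (⊤ : Submodule A E) →
          z ∈ Ideal.span (a' '' {j | j < i}) • (⊤ : Submodule A E) := by
        intro i z hz
        rw [himg] at hz ⊢
        exact hreg i.castSucc z hz
      have hsum' : ∑ j : Fin n, a' j • x' j = 0 := by
        have : ∑ j : Fin n, a' j • x' j
            = ∑ j : Fin n, a j.castSucc • x j.castSucc
              + a (Fin.last n) • ∑ j : Fin n, a j.castSucc • y j.castSucc := by
          rw [Finset.smul_sum, ← Finset.sum_add_distrib]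
          refine Finset.sum_congr rfl fun j _ => ?_
          simp only [ha', hx']
          rw [smul_add, smul_comm]
        rw [this, hy', hsum]
      have hmem := ih a' hreg' i' x' hsum'
      have himg2 : a' '' {j : Fin n | j ≠ i'} ⊆ a '' {j : Fin (n+1) | j ≠ i'.castSucc} := by
        rintro b ⟨j, hj, rfl⟩
        exact ⟨j.castSucc, fun h => hj (Fin.castSucc_injective n h), rfl⟩
      have hmem2 : x' i' ∈
          Ideal.span (a '' {j : Fin (n+1) | j ≠ i'.castSucc}) • (⊤ : Submodule A E) :=
        Submodule.smul_mono_left (Ideal.span_mono himg2) hmem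
      have hmem3 : a (Fin.last n) • y i'.castSucc ∈
          Ideal.span (a '' {j : Fin (n+1) | j ≠ i'.castSucc}) • (⊤ : Submodule A E) :=
        Submodule.smul_mem_smul
          (Ideal.subset_span ⟨Fin.last n, (Fin.castSucc_lt_last i').ne', rfl⟩)
          Submodule.mem_top
      have : x i'.castSucc = x' i' - a (Fin.last n) • y i'.castSucc := by
        simp [hx']
      rw [this]
      exact Submodule.sub_mem _ hmem2 hmem3
    · -- i = last
      refine Submodule.smul_mono_left (Ideal.span_mono (Set.image_mono ?_)) hxlast
      intro j hj
      exact ne_of_lt hj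

end Aux

/-- If `(a₁, …, aₙ)` is an `E`-regular sequence, then each `aᵢ` is `E`-regular modulo
the submodule generated by the `aⱼ E`, `j ≠ i`: any syzygy `∑ aⱼ xⱼ = 0` forces
`xᵢ ∈ ∑_{j ≠ i} aⱼ E`. -/
theorem stmt5 {A : Type*} [CommRing A] {E : Type*} [AddCommGroup E] [Module A E]
    {n : ℕ} (a : Fin n → A)
    (hreg : ∀ i : Fin n, ∀ x : E,
      a i • x ∈ Ideal.span (a '' {j | j < i}) • (⊤ : Submodule A E) →
      x ∈ Ideal.span (a '' {j | j < i}) • (⊤ : Submodule A E))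
    (i : Fin n) (x : Fin n → E) (hx : ∑ j, a j • x j = 0) :
    x i ∈ Ideal.span (a '' {j | j ≠ i}) • (⊤ : Submodule A E) :=
  main_stmt5 n a hreg i x hx
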